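/- If n ≥ 2 is an integer with n ≡ 1 (mod 24) and n ≢ 1, 49 (mod 120), then there exist positive integers a, b, c with 4/n = 1/a + 1/b + 1/c. -/

import Mathlib

theorem stmt_11 (n : ℕ) (hn : 2 ≤ n) (h24 : n % 24 = 1)
    (h : n % 120 ≠ 1 ∧ n % 120 ≠ 49) :
    ∃ a b c : ℕ, 0 < a ∧ 0 < b ∧ 0 < c ∧ (4 : ℚ) / n = 1 / a + 1 / b + 1 / c := by
  have hn0 : (n : ℚ) ≠ 0 := Nat.cast_ne_zero.mpr (by omega)
  have h5 : n % 120 = 25 ∨ n % 120 = 73 ∨ n % 120 = 97 := by omega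
  rcases h5 with h5 | h5 | h5
  · obtain ⟨k, hk⟩ : ∃ k, n = 5 * k := ⟨n / 5, by omega⟩
    have hk0 : 0 < k := by omega
    refine ⟨2 * k, 4 * k, 20 * k, by omega, by omega, by omega, ?_⟩
    have hkq : (k : ℚ) ≠ 0 := Nat.cast_ne_zero.mpr (by omega)
    have hnq : (n : ℚ) = 5 * k := by exact_mod_cast hk
    push_cast
    rw [hnq]
    field_simp
    ring
  · obtain ⟨s, hs⟩ : ∃ s, n + 7 = 40 * s := ⟨(n + 7) / 40, by omega⟩
    have hs0 : 0 < s := by omega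
    refine ⟨10 * s, 2 * s * n, 5 * s * n, by omega, by positivity, by positivity, ?_⟩
    have hsq : (s : ℚ) ≠ 0 := Nat.cast_ne_zero.mpr (by omega)
    have hnq : ((n : ℚ) + 7) = 40 * s := by exact_mod_cast hs
    push_cast
    field_simp
    linear_combination (-10 : ℚ) * hnq
  · obtain ⟨m, hm⟩ : ∃ m, n + 3 = 20 * m := ⟨(n + 3) / 20, by omega⟩
    have hm0 : 0 < m := by omega
    refine ⟨5 * m, 2 * m * n, 10 * m * n, by omega, by positivity, by positivity, ?_⟩
    have hmq : (m : ℚ) ≠ 0 := Nat.cast_ne_zero.mpr (by omega)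
    have hnq : ((n : ℚ) + 3) = 20 * m := by exact_mod_cast hm
    push_cast
    field_simp
    linear_combination (-20 : ℚ) * hnq
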